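/- For the Thue–Morse sequence t : ℕ → {0,1} and any positive integer ℓ, setting d = 2^ℓ + 1, we have t_{md} = 0 for all m ∈ {0, 1, …, 2^ℓ}. -/
import Mathlib


/-- The Thue–Morse sequence: parity of the binary digit sum. -/
def thueMorse (n : ℕ) : ℕ := (Nat.digits 2 n).sum % 2

theorem stmt_3 (ℓ : ℕ) (hℓ : 0 < ℓ) (m : ℕ) (hm : m ≤ 2 ^ ℓ) :
    thueMorse (m * (2 ^ ℓ + 1)) = 0 := by
  rcases Nat.eq_zero_or_pos m with rfl | hm0
  · simp [thueMorse]
  rcases eq_or_lt_of_le hm with rfl | hmlt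
  · -- m = 2^ℓ : n = 2^ℓ * (2^ℓ + 1)
    have h1 : Nat.digits 2 (2 ^ ℓ * (2 ^ ℓ + 1)) =
        List.replicate ℓ 0 ++ Nat.digits 2 (2 ^ ℓ + 1) := by
      have := Nat.digits_base_pow_mul (b := 2) (k := ℓ) (m := 2 ^ ℓ + 1)
        (by norm_num) (by positivity)
      simpa [mul_comm] using this
    have h2 : Nat.digits 2 (2 ^ ℓ + 1) =
        Nat.digits 2 1 ++ Nat.digits 2 (2 ^ (ℓ - 1)) := by
      rw [Nat.digits_append_digits (by norm_num)]
      congr 1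
      have : (Nat.digits 2 1).length = 1 := by simp
      rw [this]
      have : 2 ^ 1 * 2 ^ (ℓ - 1) = 2 ^ ℓ := by
        rw [← pow_add]; congr 1; omega
      omega
    have h3 : Nat.digits 2 (2 ^ (ℓ - 1)) =
        List.replicate (ℓ - 1) 0 ++ [1] := by
      have := Nat.digits_base_pow_mul (b := 2) (k := ℓ - 1) (m := 1)
        (by norm_num) one_pos
      simpa using this
    unfold thueMorse
    rw [h1, h2, h3]
    simp
  · -- m < 2^ℓ
    set L := (Nat.digits 2 m).length with hL
    have hLle : L ≤ ℓ := by
      rw [hL, Nat.digits_len 2 m (by norm_num) (by omega)]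
      have := Nat.log_lt_of_lt_pow (b := 2) (by omega) hmlt
      omega
    have hsplit : m * (2 ^ ℓ + 1) = m + 2 ^ L * (2 ^ (ℓ - L) * m) := by
      have : 2 ^ L * 2 ^ (ℓ - L) = 2 ^ ℓ := by
        rw [← pow_add]; congr 1; omega
      ring_nf
      nlinarith [this]
    have h1 : Nat.digits 2 (m * (2 ^ ℓ + 1)) =
        Nat.digits 2 m ++ Nat.digits 2 (2 ^ (ℓ - L) * m) := by
      rw [hsplit, ← Nat.digits_append_digits (by norm_num)]
    have h2 : Nat.digits 2 (2 ^ (ℓ - L) * m) =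
        List.replicate (ℓ - L) 0 ++ Nat.digits 2 m := by
      have := Nat.digits_base_pow_mul (b := 2) (k := ℓ - L) (m := m)
        (by norm_num) hm0
      simpa [mul_comm] using this
    simp only [thueMorse, h1, h2, List.sum_append]
    simp [Nat.add_mul_mod_self_left, List.sum_replicate]
    omega
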